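/- Let L be a Lie algebra over a field K, and let D and S be Lie subalgebras of L with [d,s] = 0 for all d ∈ D, s ∈ S, and D ∩ S = {0}. Let ι be a finite index type, θ : ι → D, Ω : ι → S, c : ι → ι → ι → K with [θ I + Ω I, θ J + Ω J] = Σ_{K'} c I J K' • (θ K' + Ω K') for all I, J. Assume moreover that the family (θ I)_{I ∈ ι} (viewed in L) is linearly independent over K. Then the linear span V of {θ I} is closed under the Lie bracket of L, and the unique K-linear map ρ : V → L determined by ρ(θ I) = Ω I takes values in S and satisfies ρ([x,y]) = [ρ(x), ρ(y)] for all x, y ∈ V. -/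

import Mathlib

/-- In a consistent invariant subsector, the `𝔤_S`-valued part `Ω` of the
embedding tensor defines a (possibly non-faithful) Lie algebra morphism `ρ`
from the gauge algebra spanned by the `𝔤_D`-valued parts `θ_I`, via
`Ω_I = ρ(θ_I)`. -/
theorem omega_is_representation_of_gauge_algebra
    {K : Type*} [Field K] {L : Type*} [LieRing L] [LieAlgebra K L]
    (D S : LieSubalgebra K L)
    (hcomm : ∀ d ∈ D, ∀ s ∈ S, ⁅d, s⁆ = 0)
    (hdisj : D ⊓ S = ⊥)
    {ι : Type*} [Fintype ι]
    (θ : ι → D) (Ω : ι → S) (c : ι → ι → ι → K)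
    (hclose : ∀ I J : ι,
      ⁅((θ I : L) + (Ω I : L)), ((θ J : L) + (Ω J : L))⁆ =
        ∑ K' : ι, c I J K' • ((θ K' : L) + (Ω K' : L)))
    (hind : LinearIndependent K (fun I : ι => (θ I : L))) :
    (∀ x ∈ Submodule.span K (Set.range fun I : ι => (θ I : L)),
      ∀ y ∈ Submodule.span K (Set.range fun I : ι => (θ I : L)),
        ⁅x, y⁆ ∈ Submodule.span K (Set.range fun I : ι => (θ I : L))) ∧
    (∃! ρ : (Submodule.span K (Set.range fun I : ι => (θ I : L))) →ₗ[K] L,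
      ∀ I : ι,
        ρ ⟨(θ I : L), Submodule.subset_span (Set.mem_range_self I)⟩ = (Ω I : L)) ∧
    (∀ ρ : (Submodule.span K (Set.range fun I : ι => (θ I : L))) →ₗ[K] L,
      (∀ I : ι,
        ρ ⟨(θ I : L), Submodule.subset_span (Set.mem_range_self I)⟩ = (Ω I : L)) →
      (∀ v, ρ v ∈ S) ∧
      (∀ x y : (Submodule.span K (Set.range fun I : ι => (θ I : L))),
        ∀ h : ⁅(x : L), (y : L)⁆ ∈
            Submodule.span K (Set.range fun I : ι => (θ I : L)),
          ρ ⟨⁅(x : L), (y : L)⁆, h⟩ = ⁅ρ x, ρ y⁆)) := by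
  classical
  -- Key identity: the θ's and Ω's separately satisfy the structure constants.
  have key : ∀ I J : ι,
      ⁅(θ I : L), (θ J : L)⁆ = ∑ K' : ι, c I J K' • (θ K' : L) ∧
      ⁅(Ω I : L), (Ω J : L)⁆ = ∑ K' : ι, c I J K' • (Ω K' : L) := by
    intro I J
    have h1 : ⁅(θ I : L), (Ω J : L)⁆ = 0 := hcomm _ (θ I).2 _ (Ω J).2
    have h2 : ⁅(Ω I : L), (θ J : L)⁆ = 0 := by
      rw [← lie_skew, hcomm _ (θ J).2 _ (Ω I).2, neg_zero]
    have h := hclose I J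
    rw [add_lie, lie_add, lie_add, h1, h2, add_zero, zero_add] at h
    have hsum : ∑ K' : ι, c I J K' • ((θ K' : L) + (Ω K' : L)) =
        (∑ K' : ι, c I J K' • (θ K' : L)) + ∑ K' : ι, c I J K' • (Ω K' : L) := by
      rw [← Finset.sum_add_distrib]
      exact Finset.sum_congr rfl fun _ _ => smul_add _ _ _
    rw [hsum] at h
    have hdD : (⁅(θ I : L), (θ J : L)⁆ - ∑ K' : ι, c I J K' • (θ K' : L)) ∈ D := by
      refine sub_mem (D.lie_mem (θ I).2 (θ J).2) ?_
      exact Submodule.sum_mem _ fun K' _ => Submodule.smul_mem _ _ (θ K').2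
    have hsS : (⁅(Ω I : L), (Ω J : L)⁆ - ∑ K' : ι, c I J K' • (Ω K' : L)) ∈ S := by
      refine sub_mem (S.lie_mem (Ω I).2 (Ω J).2) ?_
      exact Submodule.sum_mem _ fun K' _ => Submodule.smul_mem _ _ (Ω K').2
    have hds : (⁅(θ I : L), (θ J : L)⁆ - ∑ K' : ι, c I J K' • (θ K' : L)) =
        -(⁅(Ω I : L), (Ω J : L)⁆ - ∑ K' : ι, c I J K' • (Ω K' : L)) := by
      rw [neg_sub, sub_eq_sub_iff_add_eq_add, h, add_comm]
    have hdS : (⁅(θ I : L), (θ J : L)⁆ - ∑ K' : ι, c I J K' • (θ K' : L)) ∈ S := by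
      rw [hds]; exact neg_mem hsS
    have hd0 : (⁅(θ I : L), (θ J : L)⁆ - ∑ K' : ι, c I J K' • (θ K' : L)) = 0 := by
      have hmem : (⁅(θ I : L), (θ J : L)⁆ - ∑ K' : ι, c I J K' • (θ K' : L)) ∈
          (⊥ : LieSubalgebra K L) := by
        rw [← hdisj, LieSubalgebra.mem_inf]; exact ⟨hdD, hdS⟩
      exact (LieSubalgebra.mem_bot _).mp hmem
    have hs0 : (⁅(Ω I : L), (Ω J : L)⁆ - ∑ K' : ι, c I J K' • (Ω K' : L)) = 0 := by
      have h' := hds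
      rw [hd0] at h'
      exact neg_eq_zero.mp h'.symm
    exact ⟨sub_eq_zero.mp hd0, sub_eq_zero.mp hs0⟩
  have hθθ : ∀ I J : ι, ⁅(θ I : L), (θ J : L)⁆ = ∑ K' : ι, c I J K' • (θ K' : L) :=
    fun I J => (key I J).1
  have hΩΩ : ∀ I J : ι, ⁅(Ω I : L), (Ω J : L)⁆ = ∑ K' : ι, c I J K' • (Ω K' : L) :=
    fun I J => (key I J).2
  -- Closure of the span under the bracket.
  have hclosed : ∀ x ∈ Submodule.span K (Set.range fun I : ι => (θ I : L)),
      ∀ y ∈ Submodule.span K (Set.range fun I : ι => (θ I : L)),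
        ⁅x, y⁆ ∈ Submodule.span K (Set.range fun I : ι => (θ I : L)) := by
    intro x hx y hy
    induction hx, hy using Submodule.span_induction₂ with
    | mem_mem a b ha hb =>
      obtain ⟨I, rfl⟩ := ha
      obtain ⟨J, rfl⟩ := hb
      rw [hθθ I J]
      exact Submodule.sum_mem _ fun K' _ => Submodule.smul_mem _ _
        (Submodule.subset_span (Set.mem_range_self K'))
    | zero_left y hy => rw [zero_lie]; exact Submodule.zero_mem _
    | zero_right x hx => rw [lie_zero]; exact Submodule.zero_mem _
    | add_left x z y hx hz hy h1 h2 => rw [add_lie]; exact Submodule.add_mem _ h1 h2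
    | add_right x y z hx hy hz h1 h2 => rw [lie_add]; exact Submodule.add_mem _ h1 h2
    | smul_left r x y hx hy h1 => rw [smul_lie]; exact Submodule.smul_mem _ _ h1
    | smul_right r x y hx hy h1 => rw [lie_smul]; exact Submodule.smul_mem _ _ h1
  refine ⟨hclosed, ?_, ?_⟩
  · -- existence and uniqueness of ρ
    set b := Module.Basis.span hind with hb
    have hbi : ∀ i : ι, b i =
        ⟨(θ i : L), Submodule.subset_span (Set.mem_range_self i)⟩ :=
      fun i => Module.Basis.span_apply hind i
    refine ⟨b.constr K (fun i => (Ω i : L)), fun I => ?_, fun ρ hρ => ?_⟩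
    · rw [← hbi I, Module.Basis.constr_basis]
    · apply b.ext
      intro i
      rw [hbi i, hρ i, ← hbi i, Module.Basis.constr_basis]
  · intro ρ hρ
    set b := Module.Basis.span hind with hb
    have hbi : ∀ i : ι, b i =
        ⟨(θ i : L), Submodule.subset_span (Set.mem_range_self i)⟩ :=
      fun i => Module.Basis.span_apply hind i
    have hρb : ∀ i : ι, ρ (b i) = (Ω i : L) := fun i => by rw [hbi i, hρ i]
    constructor
    · intro v
      have hv : v ∈ Submodule.span K (Set.range b) := by
        rw [b.span_eq]; exact Submodule.mem_top
      induction hv using Submodule.span_induction with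
      | mem x hx => obtain ⟨i, rfl⟩ := hx; rw [hρb i]; exact (Ω i).2
      | zero => rw [map_zero]; exact S.zero_mem
      | add x y hx hy h1 h2 => rw [map_add]; exact S.add_mem h1 h2
      | smul r x hx h1 => rw [map_smul]; exact S.smul_mem r h1
    · -- the bracket is respected
      let Br : (Submodule.span K (Set.range fun I : ι => (θ I : L))) →ₗ[K]
          (Submodule.span K (Set.range fun I : ι => (θ I : L))) →ₗ[K]
          (Submodule.span K (Set.range fun I : ι => (θ I : L))) := LinearMap.mk₂ K
        (fun x y => ⟨⁅(x : L), (y : L)⁆, hclosed _ x.2 _ y.2⟩)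
        (fun x x' y => Subtype.ext (by simp [add_lie]))
        (fun r x y => Subtype.ext (by simp [smul_lie]))
        (fun x y y' => Subtype.ext (by simp [lie_add]))
        (fun r x y => Subtype.ext (by simp [lie_smul]))
      let F : (Submodule.span K (Set.range fun I : ι => (θ I : L))) →ₗ[K]
          (Submodule.span K (Set.range fun I : ι => (θ I : L))) →ₗ[K] L :=
        LinearMap.mk₂ K
        (fun x y => ⁅ρ x, ρ y⁆)
        (fun x x' y => by simp [add_lie])
        (fun r x y => by simp [smul_lie])
        (fun x y y' => by simp [lie_add])
        (fun r x y => by simp [lie_smul])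
      have hFG : Br.compr₂ ρ = F := by
        apply b.ext; intro i; apply b.ext; intro j
        show ρ (Br (b i) (b j)) = ⁅ρ (b i), ρ (b j)⁆
        rw [hρb i, hρb j, hΩΩ i j]
        have hBr : Br (b i) (b j) = ∑ K' : ι, c i j K' • b K' := by
          apply Subtype.ext
          show ⁅((b i : L)), ((b j : L))⁆ = _
          rw [hbi i, hbi j]
          push_cast
          rw [hθθ i j]
          exact Finset.sum_congr rfl fun K' _ => by rw [hbi K']
        rw [hBr, map_sum]
        exact Finset.sum_congr rfl fun K' _ => by rw [map_smul, hρb K']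
      intro x y h
      have hx : ρ ⟨⁅(x : L), (y : L)⁆, h⟩ = ρ (Br x y) := by
        congr 1
      rw [hx]
      have h1 := congrArg (fun f => f x y) hFG
      exact h1
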